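/- Let P be an abelian group, s a positive real, and h : P → ℝ a function such that for all L₀, L₁, …, L_r ∈ P one has h(m₁L₁ + ⋯ + m_rL_r) = O(|m|^s) and h(L₀ + m₁L₁ + ⋯ + m_rL_r) − h(m₁L₁ + ⋯ + m_rL_r) = O(|m|^{s−1}) as |m| = Σ|m_i| → ∞ over m ∈ ℤ^r. Then the function ĥ : P → ℝ defined by ĥ(L) = limsup_{m→∞} m^{−s} h(mL) satisfies ĥ(aL) = a^s ĥ(L) for every natural number a and every L ∈ P. -/

import Mathlib

open Filter Real Topology

private lemma rpow_aux (s : ℝ) {x y : ℝ} (hx : 0 < x) (hy : 0 < y) :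
    y ^ (-s) * x ^ (s - 1) = (x / y) ^ (s - 1) * y⁻¹ := by
  have h1 : (0:ℝ) < y ^ s := Real.rpow_pos_of_pos hy s
  have h2 : (0:ℝ) < x ^ s := Real.rpow_pos_of_pos hx s
  rw [Real.div_rpow hx.le hy.le, Real.rpow_sub hx, Real.rpow_sub hy, Real.rpow_one,
    Real.rpow_neg hy.le]
  field_simp
  rw [Real.rpow_one]

set_option maxHeartbeats 1000000 in
/-- **Homogeneity of the asymptotic function** (first step of Theorem A.1).
`P` is an abelian group, `s > 0` real, and `h : P → ℝ` satisfies, for every finite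
tuple `L₀, L₁, …, L_r` of elements of `P`, the growth bound
`h(m₁L₁ + ⋯ + m_rL_r) = O(|m|^s)` and the continuity bound
`h(L₀ + m₁L₁ + ⋯ + m_rL_r) − h(m₁L₁ + ⋯ + m_rL_r) = O(|m|^{s−1})` as
`|m| = Σ|mᵢ| → ∞` over `m ∈ ℤ^r`.  Then `hhat(L) = limsup_{m→∞} m^{−s} h(mL)`
satisfies `hhat(aL) = a^s · hhat(L)` for every natural number `a` and every `L ∈ P`. -/
theorem stmt0 {P : Type*} [AddCommGroup P] (s : ℝ) (hs : 0 < s) (h : P → ℝ)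
    (hgrowth : ∀ (r : ℕ) (L : Fin r → P), ∃ C N : ℝ, ∀ m : Fin r → ℤ,
      N ≤ ∑ i, |(m i : ℝ)| →
        |h (∑ i, m i • L i)| ≤ C * (∑ i, |(m i : ℝ)|) ^ s)
    (hcont : ∀ (r : ℕ) (L₀ : P) (L : Fin r → P), ∃ C N : ℝ, ∀ m : Fin r → ℤ,
      N ≤ ∑ i, |(m i : ℝ)| →
        |h (L₀ + ∑ i, m i • L i) - h (∑ i, m i • L i)|
          ≤ C * (∑ i, |(m i : ℝ)|) ^ (s - 1))
    (hhat : P → ℝ)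
    (hdef : ∀ L : P,
      hhat L = Filter.limsup (fun m : ℕ => (m : ℝ) ^ (-s) * h (m • L)) Filter.atTop) :
    ∀ (a : ℕ) (L : P), hhat (a • L) = (a : ℝ) ^ s * hhat L := by
  intro a L
  rcases Nat.eq_zero_or_pos a with rfl | ha
  · -- the case `a = 0`
    rw [hdef, zero_smul]
    have he : (fun m : ℕ => (m : ℝ) ^ (-s) * h (m • (0 : P)))
        = fun m : ℕ => (m : ℝ) ^ (-s) * h 0 := by
      funext m; rw [smul_zero]
    have htend : Tendsto (fun m : ℕ => (m : ℝ) ^ (-s) * h 0) atTop (𝓝 0) := by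
      have h1 : Tendsto (fun m : ℕ => (m : ℝ) ^ (-s)) atTop (𝓝 0) :=
        (tendsto_rpow_neg_atTop hs).comp tendsto_natCast_atTop_atTop
      simpa using h1.mul_const (h 0)
    rw [he, htend.limsup_eq, Nat.cast_zero, Real.zero_rpow hs.ne', zero_mul]
  -- now `a ≥ 1`
  have hapos : (0:ℝ) < (a:ℝ) := by exact_mod_cast ha
  have haspos : (0:ℝ) < (a:ℝ) ^ s := Real.rpow_pos_of_pos hapos s
  set f : ℕ → ℝ := fun n => (n : ℝ) ^ (-s) * h (n • L) with hfdef
  -- the growth bound specialised to multiples of `L`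
  obtain ⟨Cg, Ng, hCg⟩ := hgrowth 1 (fun _ => L)
  have hgrow : ∀ n : ℕ, Ng ≤ (n:ℝ) → |h (n • L)| ≤ Cg * (n:ℝ) ^ s := by
    intro n hn
    simpa [natCast_zsmul] using hCg (fun _ => (n:ℤ)) (by simpa using hn)
  have hfbd : ∀ᶠ n : ℕ in atTop, |f n| ≤ Cg := by
    filter_upwards [eventually_gt_atTop 0,
      tendsto_natCast_atTop_atTop.eventually_ge_atTop Ng] with n h1 hN
    have hnpos : (0:ℝ) < n := by exact_mod_cast h1
    have habs : |f n| = (n:ℝ) ^ (-s) * |h (n • L)| := by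
      rw [hfdef, abs_mul, abs_of_nonneg (Real.rpow_nonneg hnpos.le _)]
    rw [habs]
    calc (n:ℝ) ^ (-s) * |h (n • L)| ≤ (n:ℝ) ^ (-s) * (Cg * (n:ℝ) ^ s) :=
          mul_le_mul_of_nonneg_left (hgrow n hN) (Real.rpow_nonneg hnpos.le _)
      _ = Cg * ((n:ℝ) ^ (-s) * (n:ℝ) ^ s) := by ring
      _ = Cg := by rw [← Real.rpow_add hnpos, neg_add_cancel, Real.rpow_zero, mul_one]
  have hbdd : ∀ u : ℕ → ℕ, Tendsto u atTop atTop →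
      IsBoundedUnder (· ≤ ·) atTop (fun n => f (u n)) ∧
      IsBoundedUnder (· ≥ ·) atTop (fun n => f (u n)) := by
    intro u hu
    have hb := hu.eventually hfbd
    exact ⟨isBoundedUnder_of_eventually_le (hb.mono fun n hn => (abs_le.1 hn).2),
      isBoundedUnder_of_eventually_ge (hb.mono fun n hn => (abs_le.1 hn).1)⟩
  have hmul : Tendsto (fun n : ℕ => n * a) atTop atTop :=
    tendsto_atTop_atTop.2 fun b => ⟨b, fun n hn => hn.trans (Nat.le_mul_of_pos_right n ha)⟩
  have hdiv : Tendsto (fun n : ℕ => n / a) atTop atTop :=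
    tendsto_atTop_atTop.2 fun b => ⟨b * a, fun n hn => (Nat.le_div_iff_mul_le ha).2 hn⟩
  have hgt : Tendsto (fun n : ℕ => n / a * a) atTop atTop := hmul.comp hdiv
  obtain ⟨hfa, hfb⟩ := hbdd id tendsto_id
  obtain ⟨hma, hmb⟩ := hbdd (fun n => n * a) hmul
  obtain ⟨hga, hgb⟩ := hbdd (fun n => n / a * a) hgt
  -- step 1 : rewrite the sequence defining `hhat (a • L)`
  have key1 : (fun m : ℕ => (m : ℝ) ^ (-s) * h (m • a • L))
      = fun m : ℕ => (a:ℝ) ^ s * f (m * a) := by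
    funext m
    have hne : ((a:ℝ) ^ s) ≠ 0 := haspos.ne'
    simp only [hfdef, smul_smul]
    have hcast : ((m * a : ℕ) : ℝ) = (m:ℝ) * a := by push_cast; ring
    rw [hcast, Real.mul_rpow (by positivity) (by positivity), Real.rpow_neg hapos.le]
    field_simp
  rw [hdef, hdef, key1]
  -- step 2 : pull the constant out of the limsup
  have hmono : Monotone (fun x : ℝ => (a:ℝ) ^ s * x) :=
    fun x y hxy => mul_le_mul_of_nonneg_left hxy haspos.le
  have step2 := hmono.map_limsup_of_continuousAt (F := atTop) (fun m : ℕ => f (m * a))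
    ((continuous_const.mul continuous_id).continuousAt) hma hmb.isCoboundedUnder_le
  have step2' : limsup (fun m : ℕ => (a:ℝ) ^ s * f (m * a)) atTop
      = (a:ℝ) ^ s * limsup (fun m : ℕ => f (m * a)) atTop := step2.symm
  rw [step2']
  congr 1
  -- step 3 : the limsup along the subsequence of multiples of `a` is the full limsup
  -- the difference `f n - f (n / a * a)` tends to zero
  obtain ⟨Cf, Nf, hCf⟩ : ∃ (Cf Nf : Fin a → ℝ), ∀ (j : Fin a) (k : ℕ), Nf j ≤ (k:ℝ) →
      |h ((j : ℕ) • L + k • L) - h (k • L)| ≤ Cf j * (k:ℝ) ^ (s - 1) := by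
    have hc : ∀ j : Fin a, ∃ C N : ℝ, ∀ k : ℕ, N ≤ (k:ℝ) →
        |h ((j : ℕ) • L + k • L) - h (k • L)| ≤ C * (k:ℝ) ^ (s - 1) := by
      intro j
      obtain ⟨C, N, hC⟩ := hcont 1 ((j : ℕ) • L) (fun _ => L)
      exact ⟨C, N, fun k hk => by
        simpa [natCast_zsmul] using hC (fun _ => (k:ℤ)) (by simpa using hk)⟩
    choose Cf Nf hCf using hc
    exact ⟨Cf, Nf, hCf⟩
  have : Nonempty (Fin a) := ⟨⟨0, ha⟩⟩
  obtain ⟨Cm, hCm⟩ := Finite.exists_le Cf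
  obtain ⟨Nm, hNm⟩ := Finite.exists_le Nf
  set r : ℕ → ℕ := fun n => n / a * a with hrdef
  have hr_le : ∀ n, r n ≤ n := fun n => Nat.div_mul_le_self n a
  have hr_leR : ∀ n, (r n : ℝ) ≤ (n : ℝ) := fun n => by exact_mod_cast hr_le n
  have hr_ge : ∀ n : ℕ, (n:ℝ) - a ≤ (r n : ℝ) := by
    intro n
    have h1 : n < n / a * a + a := Nat.lt_div_mul_add ha
    have h2 : (n:ℝ) < (r n : ℝ) + a := by exact_mod_cast h1
    linarith
  have hratio : Tendsto (fun n : ℕ => (r n : ℝ) / n) atTop (𝓝 1) := by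
    have hlow : Tendsto (fun n : ℕ => 1 - (a:ℝ) / n) atTop (𝓝 1) := by
      simpa using tendsto_const_nhds.sub (tendsto_const_div_atTop_nhds_zero_nat (a:ℝ))
    refine tendsto_of_tendsto_of_tendsto_of_le_of_le' hlow tendsto_const_nhds ?_ ?_
    · filter_upwards [eventually_gt_atTop 0] with n hn
      have hnpos : (0:ℝ) < n := by exact_mod_cast hn
      have h1 : 1 - (a:ℝ) / n = ((n:ℝ) - a) / n := by field_simp
      rw [h1]
      exact div_le_div_of_nonneg_right (hr_ge n) hnpos.le |>.trans_eq rfl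
    · filter_upwards [eventually_gt_atTop 0] with n hn
      have hnpos : (0:ℝ) < n := by exact_mod_cast hn
      exact div_le_one_of_le₀ (hr_leR n) hnpos.le
  have hratio1 : Tendsto (fun n : ℕ => ((r n : ℝ) / n) ^ (s - 1)) atTop (𝓝 1) := by
    simpa using hratio.rpow_const (Or.inl one_ne_zero)
  have hratio2 : Tendsto (fun n : ℕ => ((r n : ℝ) / n) ^ s) atTop (𝓝 1) := by
    simpa using hratio.rpow_const (Or.inl one_ne_zero)
  have hinv : Tendsto (fun n : ℕ => (n:ℝ)⁻¹) atTop (𝓝 0) :=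
    tendsto_inv_atTop_zero.comp tendsto_natCast_atTop_atTop
  set B : ℕ → ℝ := fun n =>
    Cm * (((r n : ℝ) / n) ^ (s - 1) * (n:ℝ)⁻¹) + Cg * (1 - ((r n : ℝ) / n) ^ s) with hBdef
  have hBtend : Tendsto B atTop (𝓝 0) := by
    have h1 : Tendsto B atTop (𝓝 (Cm * (1 * 0) + Cg * (1 - 1))) :=
      ((hratio1.mul hinv).const_mul Cm).add ((tendsto_const_nhds.sub hratio2).const_mul Cg)
    simpa using h1
  have hbound : ∀ᶠ n : ℕ in atTop, |f n - f (r n)| ≤ B n := by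
    have hev : Tendsto (fun n : ℕ => (n:ℝ) - a) atTop atTop :=
      tendsto_atTop_add_const_right atTop (-(a:ℝ)) tendsto_natCast_atTop_atTop
    filter_upwards [hev.eventually_ge_atTop (max (max Nm Ng) 1), eventually_gt_atTop 0]
      with n hn hn0
    have hrge : max (max Nm Ng) 1 ≤ (r n : ℝ) := hn.trans (hr_ge n)
    have hrpos : (0:ℝ) < (r n : ℝ) := lt_of_lt_of_le one_pos ((le_max_right _ _).trans hrge)
    have hnpos : (0:ℝ) < (n:ℝ) := by exact_mod_cast hn0
    set j : Fin a := ⟨n % a, Nat.mod_lt n ha⟩ with hjdef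
    have hsplit : (n : ℕ) • L = (n % a) • L + r n • L := by
      rw [← add_smul, Nat.mod_add_div']
    have hd1 : |h (n • L) - h (r n • L)| ≤ Cm * (r n : ℝ) ^ (s - 1) := by
      have hNj : Nf j ≤ (r n : ℝ) :=
        (hNm j).trans (((le_max_left Nm Ng).trans (le_max_left _ _)).trans hrge)
      have h1 : |h ((j : ℕ) • L + r n • L) - h (r n • L)| ≤ Cf j * (r n : ℝ) ^ (s - 1) :=
        hCf j (r n) hNj
      calc |h (n • L) - h (r n • L)| = |h ((j : ℕ) • L + r n • L) - h (r n • L)| := by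
            rw [hjdef]; rw [hsplit]
        _ ≤ Cf j * (r n : ℝ) ^ (s - 1) := h1
        _ ≤ Cm * (r n : ℝ) ^ (s - 1) :=
            mul_le_mul_of_nonneg_right (hCm j) (Real.rpow_nonneg hrpos.le _)
    have hd2 : |h (r n • L)| ≤ Cg * (r n : ℝ) ^ s :=
      hgrow (r n) (((le_max_right Nm Ng).trans (le_max_left _ _)).trans hrge)
    have hrewrite : f n - f (r n) = (n:ℝ) ^ (-s) * (h (n • L) - h (r n • L))
        + ((n:ℝ) ^ (-s) - (r n : ℝ) ^ (-s)) * h (r n • L) := by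
      simp only [hfdef]; ring
    have t1 : |(n:ℝ) ^ (-s) * (h (n • L) - h (r n • L))|
        ≤ Cm * (((r n : ℝ) / n) ^ (s - 1) * (n:ℝ)⁻¹) := by
      rw [abs_mul, abs_of_nonneg (Real.rpow_nonneg hnpos.le _)]
      calc (n:ℝ) ^ (-s) * |h (n • L) - h (r n • L)|
          ≤ (n:ℝ) ^ (-s) * (Cm * (r n : ℝ) ^ (s - 1)) :=
            mul_le_mul_of_nonneg_left hd1 (Real.rpow_nonneg hnpos.le _)
        _ = Cm * ((n:ℝ) ^ (-s) * (r n : ℝ) ^ (s - 1)) := by ring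
        _ = Cm * (((r n : ℝ) / n) ^ (s - 1) * (n:ℝ)⁻¹) := by rw [rpow_aux s hrpos hnpos]
    have t2 : |((n:ℝ) ^ (-s) - (r n : ℝ) ^ (-s)) * h (r n • L)|
        ≤ Cg * (1 - ((r n : ℝ) / n) ^ s) := by
      rw [abs_mul]
      have hmon : (n:ℝ) ^ (-s) ≤ (r n : ℝ) ^ (-s) :=
        Real.rpow_le_rpow_of_nonpos hrpos (hr_leR n) (neg_nonpos.2 hs.le)
      have habs : |(n:ℝ) ^ (-s) - (r n : ℝ) ^ (-s)| = (r n : ℝ) ^ (-s) - (n:ℝ) ^ (-s) := by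
        rw [abs_sub_comm, abs_of_nonneg (sub_nonneg.2 hmon)]
      rw [habs]
      calc ((r n : ℝ) ^ (-s) - (n:ℝ) ^ (-s)) * |h (r n • L)|
          ≤ ((r n : ℝ) ^ (-s) - (n:ℝ) ^ (-s)) * (Cg * (r n : ℝ) ^ s) :=
            mul_le_mul_of_nonneg_left hd2 (sub_nonneg.2 hmon)
        _ = Cg * ((r n : ℝ) ^ (-s) * (r n : ℝ) ^ s - (n:ℝ) ^ (-s) * (r n : ℝ) ^ s) := by ring
        _ = Cg * (1 - ((r n : ℝ) / n) ^ s) := by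
            rw [← Real.rpow_add hrpos, neg_add_cancel, Real.rpow_zero,
              Real.div_rpow hrpos.le hnpos.le, Real.rpow_neg hnpos.le]
            ring
    calc |f n - f (r n)| = |(n:ℝ) ^ (-s) * (h (n • L) - h (r n • L))
          + ((n:ℝ) ^ (-s) - (r n : ℝ) ^ (-s)) * h (r n • L)| := by rw [hrewrite]
      _ ≤ |(n:ℝ) ^ (-s) * (h (n • L) - h (r n • L))|
          + |((n:ℝ) ^ (-s) - (r n : ℝ) ^ (-s)) * h (r n • L)| := abs_add_le _ _
      _ ≤ B n := by rw [hBdef]; exact add_le_add t1 t2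
  have hdiff : Tendsto (fun n : ℕ => f n - f (r n)) atTop (𝓝 0) := by
    refine tendsto_of_tendsto_of_tendsto_of_le_of_le' (by simpa using hBtend.neg) hBtend
      (hbound.mono fun n hn => ?_) (hbound.mono fun n hn => (abs_le.1 hn).2)
    exact (abs_le.1 hn).1
  -- inequality ≤
  have le1 : limsup (fun m : ℕ => f (m * a)) atTop ≤ limsup f atTop := by
    have cb : IsCoboundedUnder (· ≤ ·) (map (fun n : ℕ => n * a) atTop) f := by
      have h1 := hmb.isCoboundedUnder_le
      show Filter.IsCobounded (· ≤ ·) (map f (map (fun n : ℕ => n * a) atTop))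
      rw [map_map]
      exact h1
    have e2 : (fun m : ℕ => f (m * a)) = f ∘ (fun n : ℕ => n * a) := rfl
    rw [e2, limsup_comp]
    exact limsup_le_limsup_of_le hmul cb hfa
  -- inequality ≥
  have ge1 : limsup f atTop ≤ limsup (fun m : ℕ => f (m * a)) atTop := by
    refine le_of_forall_pos_le_add fun ε hε => ?_
    have hev : ∀ᶠ n : ℕ in atTop, f n ≤ f (r n) + ε := by
      filter_upwards [hdiff.eventually_lt_const hε] with n hn
      linarith
    have hgac : IsBoundedUnder (· ≤ ·) atTop (fun n : ℕ => f (r n) + ε) := by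
      obtain ⟨b, hb⟩ := hga
      refine isBoundedUnder_of_eventually_le (a := b + ε) ?_
      exact (eventually_map.1 hb).mono fun n hn => add_le_add_left hn ε
    have cb' : IsCoboundedUnder (· ≤ ·) (map (fun n : ℕ => n / a) atTop)
        (fun m : ℕ => f (m * a)) := by
      have h1 := hgb.isCoboundedUnder_le
      show Filter.IsCobounded (· ≤ ·)
        (map (fun m : ℕ => f (m * a)) (map (fun n : ℕ => n / a) atTop))
      rw [map_map]
      exact h1
    calc limsup f atTop ≤ limsup (fun n : ℕ => f (r n) + ε) atTop :=
          limsup_le_limsup hev hfb.isCoboundedUnder_le hgac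
      _ = limsup (fun n : ℕ => f (r n)) atTop + ε :=
          limsup_add_const atTop _ ε hga hgb.isCoboundedUnder_le
      _ ≤ limsup (fun m : ℕ => f (m * a)) atTop + ε := by
          have h2 : limsup (fun n : ℕ => f (r n)) atTop
              ≤ limsup (fun m : ℕ => f (m * a)) atTop := by
            have e1 : (fun n : ℕ => f (r n))
                = (fun m : ℕ => f (m * a)) ∘ (fun n : ℕ => n / a) := by
              funext n; simp only [hrdef, Function.comp_apply]
            rw [e1, limsup_comp]
            exact limsup_le_limsup_of_le hdiv cb' hma
          exact add_le_add_left h2 ε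
  exact le_antisymm le1 ge1
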